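/- Let G be a bipartite false twin-free graph without isolated vertices. Then γ_t(G) = γ_gr^t(G) = 4 if and only if G is isomorphic to the graph K_{n,n} − M for some n ≥ 2, where M denotes a perfect matching of the complete bipartite graph K_{n,n}. -/

import Mathlib

/-- `S` is a total dominating set of `G`: every vertex has a neighbor in `S`. -/
def IsTotalDomSet {V : Type*} (G : SimpleGraph V) (S : Set V) : Prop :=
  ∀ v : V, ∃ u ∈ S, G.Adj v u

/-- `l` is a legal sequence of `G`: the vertices are distinct and every vertex
(except possibly the first) totally dominates a vertex not totally dominated
by the previous vertices. -/
def IsLegalSeq {V : Type*} (G : SimpleGraph V) (l : List V) : Prop :=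
  l.Nodup ∧ ∀ i : Fin l.length, 0 < (i : ℕ) →
    ∃ w : V, G.Adj (l.get i) w ∧ ∀ j : Fin l.length, (j : ℕ) < (i : ℕ) → ¬ G.Adj (l.get j) w

/-- `l` is a total dominating sequence of `G`. -/
def IsTotalDomSeq {V : Type*} (G : SimpleGraph V) (l : List V) : Prop :=
  IsLegalSeq G l ∧ IsTotalDomSet G {v | v ∈ l}

/-- The Grundy total domination number of `G`: the maximum length of a total
dominating sequence. -/
noncomputable def grundyTotalDomNum {V : Type*} (G : SimpleGraph V) : ℕ :=
  sSup {k : ℕ | ∃ l : List V, IsTotalDomSeq G l ∧ l.length = k}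

/-- The total domination number of `G`: the minimum cardinality of a total
dominating set. -/
noncomputable def totalDomNum {V : Type*} (G : SimpleGraph V) : ℕ :=
  sInf {k : ℕ | ∃ S : Set V, IsTotalDomSet G S ∧ S.ncard = k}

/-- `A`, `B` is a bipartition of `G`. -/
def IsBipartitionOf {V : Type*} (G : SimpleGraph V) (A B : Set V) : Prop :=
  (∀ v : V, (v ∈ A ∧ v ∉ B) ∨ (v ∈ B ∧ v ∉ A)) ∧
  ∀ ⦃u v : V⦄, G.Adj u v → (u ∈ A ∧ v ∈ B) ∨ (u ∈ B ∧ v ∈ A)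

/-- `G` has no false twins: distinct vertices have distinct open neighborhoods. -/
def FalseTwinFree {V : Type*} (G : SimpleGraph V) : Prop :=
  ∀ u v : V, u ≠ v → G.neighborSet u ≠ G.neighborSet v

/-- `G` has no isolated vertices. -/
def NoIsolatedVerts {V : Type*} (G : SimpleGraph V) : Prop :=
  ∀ v : V, ∃ u : V, G.Adj v u

/-- The graph `K_{n,n} − M`: the complete bipartite graph `K_{n,n}` minus a
perfect matching `M` (all perfect matchings give isomorphic graphs; here the
matching matches `Sum.inl i` with `Sum.inr i`). -/
def KnnMinusMatching (n : ℕ) : SimpleGraph (Fin n ⊕ Fin n) :=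
  SimpleGraph.fromRel (fun x y =>
    match x, y with
    | Sum.inl i, Sum.inr j => i ≠ j
    | _, _ => False)

set_option linter.unusedSectionVars false
set_option linter.unusedVariables false

section General
variable {V : Type*} [Fintype V] {G : SimpleGraph V}

lemma bddAbove_tdseq : BddAbove {k : ℕ | ∃ l : List V, IsTotalDomSeq G l ∧ l.length = k} :=
  ⟨Fintype.card V, by rintro k ⟨l, hl, rfl⟩; exact hl.1.1.length_le_card⟩

lemma IsLegalSeq.append {l : List V} (hl : IsLegalSeq G l) {v u : V}
    (hv : ∀ x ∈ l, ¬ G.Adj v x) (hu : G.Adj v u) :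
    IsLegalSeq G (l ++ [u]) := by
  have hunl : u ∉ l := fun h => hv u h hu
  constructor
  · exact List.Nodup.append hl.1 (List.nodup_singleton u)
      (by simpa [List.disjoint_singleton] using hunl)
  · intro i hi
    by_cases hil : (i : ℕ) < l.length
    · obtain ⟨w, hw1, hw2⟩ := hl.2 ⟨i, hil⟩ hi
      refine ⟨w, ?_, ?_⟩
      · simpa [List.get_eq_getElem, List.getElem_append_left hil] using hw1
      · intro j hj
        have hjl : (j : ℕ) < l.length := lt_trans hj hil
        have := hw2 ⟨j, hjl⟩ hj
        simpa [List.get_eq_getElem, List.getElem_append_left hjl] using this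
    · have hieq : (i : ℕ) = l.length := by
        have := i.isLt; simp at this; omega
      refine ⟨v, ?_, ?_⟩
      · have : (l ++ [u]).get i = u := by
          simp [List.get_eq_getElem, hieq]
        rw [this]; exact hu.symm
      · intro j hj
        have hjl : (j : ℕ) < l.length := by omega
        have : (l ++ [u]).get j = l.get ⟨j, hjl⟩ := by
          simp [List.get_eq_getElem, List.getElem_append_left hjl]
        rw [this]
        intro had
        exact hv _ (List.get_mem l ⟨j, hjl⟩) had.symm

lemma exists_tdseq_ge (hiso : NoIsolatedVerts G) :
    ∀ (k : ℕ) (l : List V), IsLegalSeq G l → Fintype.card V ≤ l.length + k →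
      ∃ l', IsTotalDomSeq G l' ∧ l.length ≤ l'.length := by
  intro k
  induction k with
  | zero =>
    intro l hl hcard
    classical
    refine ⟨l, ⟨hl, ?_⟩, le_rfl⟩
    have hlen : l.length = Fintype.card V :=
      le_antisymm hl.1.length_le_card (by omega)
    have hall : ∀ x : V, x ∈ l := by
      intro x
      have h1 : l.toFinset.card = l.length := List.toFinset_card_of_nodup hl.1
      have h2 : l.toFinset = Finset.univ := by
        apply Finset.eq_univ_of_card; rw [h1, hlen]
      have := Finset.mem_univ x
      rw [← h2, List.mem_toFinset] at this
      exact this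
    intro v
    obtain ⟨u, hu⟩ := hiso v
    exact ⟨u, hall u, hu⟩
  | succ k ih =>
    intro l hl hcard
    by_cases hd : IsTotalDomSet G {v | v ∈ l}
    · exact ⟨l, ⟨hl, hd⟩, le_rfl⟩
    · rw [IsTotalDomSet] at hd; push_neg at hd
      obtain ⟨x, hx⟩ := hd
      obtain ⟨u, hu⟩ := hiso x
      have h2 := hl.append (fun y hy => hx y hy) hu
      obtain ⟨l', h3, h4⟩ := ih (l ++ [u]) h2 (by simp; omega)
      refine ⟨l', h3, ?_⟩
      have : (l ++ [u]).length = l.length + 1 := by simp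
      omega

lemma legal_length_le_four (hiso : NoIsolatedVerts G) (hg : grundyTotalDomNum G = 4)
    {l : List V} (hl : IsLegalSeq G l) : l.length ≤ 4 := by
  obtain ⟨l', h', hle⟩ := exists_tdseq_ge hiso (Fintype.card V) l hl (by omega)
  have : l'.length ≤ grundyTotalDomNum G := le_csSup bddAbove_tdseq ⟨l', h', rfl⟩
  omega

lemma exists_tdseq (hiso : NoIsolatedVerts G) : ∃ l : List V, IsTotalDomSeq G l := by
  have hnil : IsLegalSeq G ([] : List V) := ⟨List.nodup_nil, fun i => absurd i.isLt (by simp)⟩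
  obtain ⟨l', h', _⟩ := exists_tdseq_ge hiso (Fintype.card V) [] hnil (by simp)
  exact ⟨l', h'⟩

lemma exists_tdseq_four (hiso : NoIsolatedVerts G) (hg : grundyTotalDomNum G = 4) :
    ∃ l : List V, IsTotalDomSeq G l ∧ l.length = 4 := by
  have hne : {k : ℕ | ∃ l : List V, IsTotalDomSeq G l ∧ l.length = k}.Nonempty := by
    obtain ⟨l, hl⟩ := exists_tdseq hiso
    exact ⟨l.length, l, hl, rfl⟩
  have := Nat.sSup_mem hne bddAbove_tdseq
  rw [grundyTotalDomNum] at hg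
  rw [hg] at this
  exact this

lemma tds_four_le (ht : totalDomNum G = 4) {S : Set V} (hS : IsTotalDomSet G S) :
    4 ≤ S.ncard := by
  have : totalDomNum G ≤ S.ncard := Nat.sInf_le ⟨S, hS, rfl⟩
  omega

end General

section Five
variable {V : Type*} {G : SimpleGraph V}

lemma legal_five {v1 v2 v3 v4 v5 : V}
    (hnd : ([v1,v2,v3,v4,v5] : List V).Nodup)
    (h2 : ∃ w, G.Adj v2 w ∧ ¬ G.Adj v1 w)
    (h3 : ∃ w, G.Adj v3 w ∧ ¬ G.Adj v1 w ∧ ¬ G.Adj v2 w)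
    (h4 : ∃ w, G.Adj v4 w ∧ ¬ G.Adj v1 w ∧ ¬ G.Adj v2 w ∧ ¬ G.Adj v3 w)
    (h5 : ∃ w, G.Adj v5 w ∧ ¬ G.Adj v1 w ∧ ¬ G.Adj v2 w ∧ ¬ G.Adj v3 w ∧ ¬ G.Adj v4 w) :
    IsLegalSeq G [v1,v2,v3,v4,v5] := by
  obtain ⟨w2, hw2⟩ := h2
  obtain ⟨w3, hw3⟩ := h3
  obtain ⟨w4, hw4⟩ := h4
  obtain ⟨w5, hw5⟩ := h5
  refine ⟨hnd, ?_⟩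
  intro i hi
  fin_cases i
  · norm_num at hi
  · refine ⟨w2, hw2.1, ?_⟩
    intro j hj
    fin_cases j
    · exact hw2.2
    all_goals simp at hj
  · refine ⟨w3, hw3.1, ?_⟩
    intro j hj
    fin_cases j
    · exact hw3.2.1
    · exact hw3.2.2
    all_goals simp at hj
  · refine ⟨w4, hw4.1, ?_⟩
    intro j hj
    fin_cases j
    · exact hw4.2.1
    · exact hw4.2.2.1
    · exact hw4.2.2.2
    all_goals simp at hj
  · refine ⟨w5, hw5.1, ?_⟩
    intro j hj
    fin_cases j
    · exact hw5.2.1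
    · exact hw5.2.2.1
    · exact hw5.2.2.2.1
    · exact hw5.2.2.2.2
    all_goals simp at hj

end Five

section Iso
variable {V W : Type*} {G : SimpleGraph V} {H : SimpleGraph W}

lemma isTotalDomSet_map (e : G ≃g H) {S : Set V} (hS : IsTotalDomSet G S) :
    IsTotalDomSet H (⇑e '' S) := by
  intro v
  obtain ⟨u, hu, ha⟩ := hS (e.symm v)
  refine ⟨e u, Set.mem_image_of_mem _ hu, ?_⟩
  have : H.Adj (e (e.symm v)) (e u) := e.map_adj_iff.mpr ha
  simpa using this

lemma isLegalSeq_map (e : G ≃g H) {l : List V} (hl : IsLegalSeq G l) :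
    IsLegalSeq H (l.map ⇑e) := by
  refine ⟨hl.1.map e.toEquiv.injective, ?_⟩
  intro i hi
  have hlen : (l.map ⇑e).length = l.length := by simp
  have hil : (i : ℕ) < l.length := by omega
  obtain ⟨w, hw1, hw2⟩ := hl.2 ⟨i, hil⟩ hi
  refine ⟨e w, ?_, ?_⟩
  · have : (l.map ⇑e).get i = e (l.get ⟨i, hil⟩) := by
      simp [List.get_eq_getElem]
    rw [this]; exact e.map_adj_iff.mpr hw1
  · intro j hj
    have hjl : (j : ℕ) < l.length := by omega
    have : (l.map ⇑e).get j = e (l.get ⟨j, hjl⟩) := by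
      simp [List.get_eq_getElem]
    rw [this]
    intro had
    exact hw2 ⟨j, hjl⟩ hj (e.map_adj_iff.mp had)

lemma isTotalDomSeq_map (e : G ≃g H) {l : List V} (hl : IsTotalDomSeq G l) :
    IsTotalDomSeq H (l.map ⇑e) := by
  refine ⟨isLegalSeq_map e hl.1, ?_⟩
  have : {v | v ∈ l.map ⇑e} = ⇑e '' {v | v ∈ l} := by
    ext v; simp [List.mem_map, Set.mem_image]
  rw [this]
  exact isTotalDomSet_map e hl.2

lemma grundy_eq_of_iso (e : G ≃g H) : grundyTotalDomNum G = grundyTotalDomNum H := by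
  unfold grundyTotalDomNum
  congr 1
  ext k
  constructor
  · rintro ⟨l, hl, rfl⟩
    exact ⟨l.map ⇑e, isTotalDomSeq_map e hl, by simp⟩
  · rintro ⟨l, hl, rfl⟩
    exact ⟨l.map ⇑e.symm, isTotalDomSeq_map e.symm hl, by simp⟩

lemma totalDom_eq_of_iso (e : G ≃g H) : totalDomNum G = totalDomNum H := by
  unfold totalDomNum
  congr 1
  ext k
  constructor
  · rintro ⟨S, hS, rfl⟩
    exact ⟨⇑e '' S, isTotalDomSet_map e hS,
      Set.ncard_image_of_injective _ e.toEquiv.injective⟩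
  · rintro ⟨S, hS, rfl⟩
    exact ⟨⇑e.symm '' S, isTotalDomSet_map e.symm hS,
      Set.ncard_image_of_injective _ e.symm.toEquiv.injective⟩

end Iso

lemma ncard_quad {α : Type*} {a b c d : α} (h1 : a≠b) (h2 : a≠c) (h3 : a≠d)
    (h4 : b≠c) (h5 : b≠d) (h6 : c≠d) : ({a,b,c,d} : Set α).ncard = 4 := by
  rw [Set.ncard_insert_of_notMem (by simp [h1,h2,h3])
      (((Set.finite_singleton d).insert c).insert b),
    Set.ncard_insert_of_notMem (by simp [h4,h5]) ((Set.finite_singleton d).insert c),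
    Set.ncard_insert_of_notMem (by simp [h6]) (Set.finite_singleton d),
    Set.ncard_singleton]

section Knn
variable {n : ℕ}

lemma Knn_adj_inl_inr {i j : Fin n} :
    (KnnMinusMatching n).Adj (Sum.inl i) (Sum.inr j) ↔ i ≠ j := by
  simp [KnnMinusMatching, SimpleGraph.fromRel_adj]

lemma Knn_adj_inr_inl {i j : Fin n} :
    (KnnMinusMatching n).Adj (Sum.inr i) (Sum.inl j) ↔ j ≠ i := by
  simp [KnnMinusMatching, SimpleGraph.fromRel_adj]

lemma Knn_not_adj_inl_inl {i j : Fin n} :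
    ¬ (KnnMinusMatching n).Adj (Sum.inl i) (Sum.inl j) := by
  simp [KnnMinusMatching, SimpleGraph.fromRel_adj]

lemma Knn_not_adj_inr_inr {i j : Fin n} :
    ¬ (KnnMinusMatching n).Adj (Sum.inr i) (Sum.inr j) := by
  simp [KnnMinusMatching, SimpleGraph.fromRel_adj]

lemma Knn_legal_le {l : List (Fin n ⊕ Fin n)} (hl : IsLegalSeq (KnnMinusMatching n) l) :
    l.length ≤ 4 := by
  classical
  have hinj : Function.Injective l.get := List.nodup_iff_injective_get.mp hl.1
  -- at most two inl's
  have hleft : (Finset.univ.filter (fun i : Fin l.length => (l.get i).isLeft)).card ≤ 2 := by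
    by_contra hc
    push_neg at hc
    set T := Finset.univ.filter (fun i : Fin l.length => (l.get i).isLeft) with hT
    have hTne : T.Nonempty := Finset.card_pos.mp (by omega)
    set c := T.max' hTne with hcdef
    have hcT : c ∈ T := T.max'_mem hTne
    have herase : 1 < (T.erase c).card := by
      rw [Finset.card_erase_of_mem hcT]; omega
    obtain ⟨a, ha, b, hb, hab⟩ := Finset.one_lt_card.mp herase
    have haT := Finset.mem_of_mem_erase ha
    have hbT := Finset.mem_of_mem_erase hb
    have hac : a < c := lt_of_le_of_ne (T.le_max' a haT) (Finset.ne_of_mem_erase ha)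
    have hbc : b < c := lt_of_le_of_ne (T.le_max' b hbT) (Finset.ne_of_mem_erase hb)
    obtain ⟨ka, hka⟩ := Sum.isLeft_iff.mp (Finset.mem_filter.mp haT).2
    obtain ⟨kb, hkb⟩ := Sum.isLeft_iff.mp (Finset.mem_filter.mp hbT).2
    obtain ⟨kc, hkc⟩ := Sum.isLeft_iff.mp (Finset.mem_filter.mp hcT).2
    obtain ⟨w, hwc, hwall⟩ := hl.2 c (by
      have : (a : ℕ) < (c : ℕ) := hac
      omega)
    rw [hkc] at hwc
    obtain ⟨j, rfl⟩ : ∃ j, w = Sum.inr j := by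
      cases w with
      | inl j => exact absurd hwc Knn_not_adj_inl_inl
      | inr j => exact ⟨j, rfl⟩
    have h1 := hwall a hac
    have h2 := hwall b hbc
    rw [hka] at h1
    rw [hkb] at h2
    have e1 : ka = j := by by_contra h; exact h1 (Knn_adj_inl_inr.mpr h)
    have e2 : kb = j := by by_contra h; exact h2 (Knn_adj_inl_inr.mpr h)
    exact hab (hinj (by rw [hka, hkb, e1, e2]))
  have hright : (Finset.univ.filter (fun i : Fin l.length => ¬ (l.get i).isLeft)).card ≤ 2 := by
    by_contra hc
    push_neg at hc
    set T := Finset.univ.filter (fun i : Fin l.length => ¬ (l.get i).isLeft) with hT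
    have hTne : T.Nonempty := Finset.card_pos.mp (by omega)
    set c := T.max' hTne with hcdef
    have hcT : c ∈ T := T.max'_mem hTne
    have herase : 1 < (T.erase c).card := by
      rw [Finset.card_erase_of_mem hcT]; omega
    obtain ⟨a, ha, b, hb, hab⟩ := Finset.one_lt_card.mp herase
    have haT := Finset.mem_of_mem_erase ha
    have hbT := Finset.mem_of_mem_erase hb
    have hac : a < c := lt_of_le_of_ne (T.le_max' a haT) (Finset.ne_of_mem_erase ha)
    have hbc : b < c := lt_of_le_of_ne (T.le_max' b hbT) (Finset.ne_of_mem_erase hb)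
    obtain ⟨ka, hka⟩ := Sum.isRight_iff.mp (Sum.not_isLeft.mp (Finset.mem_filter.mp haT).2)
    obtain ⟨kb, hkb⟩ := Sum.isRight_iff.mp (Sum.not_isLeft.mp (Finset.mem_filter.mp hbT).2)
    obtain ⟨kc, hkc⟩ := Sum.isRight_iff.mp (Sum.not_isLeft.mp (Finset.mem_filter.mp hcT).2)
    obtain ⟨w, hwc, hwall⟩ := hl.2 c (by
      have : (a : ℕ) < (c : ℕ) := hac
      omega)
    rw [hkc] at hwc
    obtain ⟨j, rfl⟩ : ∃ j, w = Sum.inl j := by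
      cases w with
      | inl j => exact ⟨j, rfl⟩
      | inr j => exact absurd hwc Knn_not_adj_inr_inr
    have h1 := hwall a hac
    have h2 := hwall b hbc
    rw [hka] at h1
    rw [hkb] at h2
    have e1 : j = ka := by by_contra h; exact h1 (Knn_adj_inr_inl.mpr h)
    have e2 : j = kb := by by_contra h; exact h2 (Knn_adj_inr_inl.mpr h)
    exact hab (hinj (by rw [hka, hkb, ← e1, ← e2]))
  have := Finset.card_filter_add_card_filter_not
    (s := (Finset.univ : Finset (Fin l.length)))
    (p := fun i : Fin l.length => (l.get i).isLeft)
  simp only [Finset.card_univ, Fintype.card_fin] at this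
  omega

end Knn

section Four
variable {V : Type*} {G : SimpleGraph V}
lemma legal_four {v1 v2 v3 v4 : V}
    (hnd : ([v1,v2,v3,v4] : List V).Nodup)
    (h2 : ∃ w, G.Adj v2 w ∧ ¬ G.Adj v1 w)
    (h3 : ∃ w, G.Adj v3 w ∧ ¬ G.Adj v1 w ∧ ¬ G.Adj v2 w)
    (h4 : ∃ w, G.Adj v4 w ∧ ¬ G.Adj v1 w ∧ ¬ G.Adj v2 w ∧ ¬ G.Adj v3 w) :
    IsLegalSeq G [v1,v2,v3,v4] := by
  obtain ⟨w2, hw2⟩ := h2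
  obtain ⟨w3, hw3⟩ := h3
  obtain ⟨w4, hw4⟩ := h4
  refine ⟨hnd, ?_⟩
  intro i hi
  fin_cases i
  · norm_num at hi
  · refine ⟨w2, hw2.1, ?_⟩
    intro j hj
    fin_cases j
    · exact hw2.2
    all_goals simp at hj
  · refine ⟨w3, hw3.1, ?_⟩
    intro j hj
    fin_cases j
    · exact hw3.2.1
    · exact hw3.2.2
    all_goals simp at hj
  · refine ⟨w4, hw4.1, ?_⟩
    intro j hj
    fin_cases j
    · exact hw4.2.1
    · exact hw4.2.2.1
    · exact hw4.2.2.2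
    all_goals simp at hj
end Four

section KnnMain
variable {m : ℕ}

lemma Knn_tdseq_four :
    ∃ l : List (Fin (m+2) ⊕ Fin (m+2)), IsTotalDomSeq (KnnMinusMatching (m+2)) l ∧
      l.length = 4 := by
  have h01 : (0 : Fin (m+2)) ≠ 1 := by
    simp [Fin.ext_iff]
  refine ⟨[Sum.inl 0, Sum.inl 1, Sum.inr 0, Sum.inr 1], ⟨?_, ?_⟩, rfl⟩
  · refine legal_four (by simp [h01]) ?_ ?_ ?_
    · exact ⟨Sum.inr 0, Knn_adj_inl_inr.mpr h01.symm, by rw [Knn_adj_inl_inr]; simp⟩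
    · exact ⟨Sum.inl 1, Knn_adj_inr_inl.mpr h01.symm,
        Knn_not_adj_inl_inl, Knn_not_adj_inl_inl⟩
    · refine ⟨Sum.inl 0, Knn_adj_inr_inl.mpr h01, Knn_not_adj_inl_inl,
        Knn_not_adj_inl_inl, by rw [Knn_adj_inr_inl]; simp⟩
  · intro v
    match v with
    | Sum.inl i =>
      by_cases h : i = 0
      · exact ⟨Sum.inr 1, by simp, Knn_adj_inl_inr.mpr (by rw [h]; exact h01)⟩
      · exact ⟨Sum.inr 0, by simp, Knn_adj_inl_inr.mpr h⟩
    | Sum.inr i =>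
      by_cases h : i = 0
      · exact ⟨Sum.inl 1, by simp, by rw [h]; exact Knn_adj_inr_inl.mpr h01.symm⟩
      · exact ⟨Sum.inl 0, by simp, Knn_adj_inr_inl.mpr (Ne.symm (by simpa using h))⟩

lemma Knn_grundy : grundyTotalDomNum (KnnMinusMatching (m+2)) = 4 := by
  obtain ⟨l₀, hl₀, hlen⟩ := Knn_tdseq_four (m := m)
  have hmem : 4 ∈ {k : ℕ | ∃ l : List (Fin (m+2) ⊕ Fin (m+2)),
      IsTotalDomSeq (KnnMinusMatching (m+2)) l ∧ l.length = k} := ⟨l₀, hl₀, hlen⟩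
  apply le_antisymm
  · apply csSup_le ⟨4, hmem⟩
    rintro k ⟨l, hl, rfl⟩
    exact Knn_legal_le hl.1
  · apply le_csSup ⟨4, ?_⟩ hmem
    rintro k ⟨l, hl, rfl⟩
    exact Knn_legal_le hl.1

lemma Knn_totalDom : totalDomNum (KnnMinusMatching (m+2)) = 4 := by
  have h01 : (0 : Fin (m+2)) ≠ 1 := by simp [Fin.ext_iff]
  have hS : IsTotalDomSet (KnnMinusMatching (m+2))
      {Sum.inl 0, Sum.inl 1, Sum.inr 0, Sum.inr 1} := by
    intro v
    match v with
    | Sum.inl i =>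
      by_cases h : i = 0
      · exact ⟨Sum.inr 1, by simp, Knn_adj_inl_inr.mpr (by rw [h]; exact h01)⟩
      · exact ⟨Sum.inr 0, by simp, Knn_adj_inl_inr.mpr h⟩
    | Sum.inr i =>
      by_cases h : i = 0
      · exact ⟨Sum.inl 1, by simp, by rw [h]; exact Knn_adj_inr_inl.mpr h01.symm⟩
      · exact ⟨Sum.inl 0, by simp, Knn_adj_inr_inl.mpr (Ne.symm (by simpa using h))⟩
  have hmem : 4 ∈ {k : ℕ | ∃ S : Set (Fin (m+2) ⊕ Fin (m+2)),
      IsTotalDomSet (KnnMinusMatching (m+2)) S ∧ S.ncard = k} := by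
    refine ⟨_, hS, ncard_quad ?_ ?_ ?_ ?_ ?_ ?_⟩ <;> simp [h01]
  apply le_antisymm
  · exact Nat.sInf_le hmem
  · apply le_csInf ⟨4, hmem⟩
    rintro k ⟨S, hS', rfl⟩
    -- extract two lefts and two rights
    obtain ⟨u1, hu1S, hu1⟩ := hS' (Sum.inl 0)
    obtain ⟨j1, rfl⟩ : ∃ j, u1 = Sum.inr j := by
      cases u1 with
      | inl j => exact absurd hu1 Knn_not_adj_inl_inl
      | inr j => exact ⟨j, rfl⟩
    obtain ⟨u2, hu2S, hu2⟩ := hS' (Sum.inl j1)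
    obtain ⟨j2, rfl⟩ : ∃ j, u2 = Sum.inr j := by
      cases u2 with
      | inl j => exact absurd hu2 Knn_not_adj_inl_inl
      | inr j => exact ⟨j, rfl⟩
    have hj12 : j1 ≠ j2 := Knn_adj_inl_inr.mp hu2 
    obtain ⟨u3, hu3S, hu3⟩ := hS' (Sum.inr 0)
    obtain ⟨k1, rfl⟩ : ∃ j, u3 = Sum.inl j := by
      cases u3 with
      | inl j => exact ⟨j, rfl⟩
      | inr j => exact absurd hu3 Knn_not_adj_inr_inr
    obtain ⟨u4, hu4S, hu4⟩ := hS' (Sum.inr k1)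
    obtain ⟨k2, rfl⟩ : ∃ j, u4 = Sum.inl j := by
      cases u4 with
      | inl j => exact ⟨j, rfl⟩
      | inr j => exact absurd hu4 Knn_not_adj_inr_inr
    have hk12 : k1 ≠ k2 := (Knn_adj_inr_inl.mp hu4).symm
    have hsub : ({Sum.inl k1, Sum.inl k2, Sum.inr j1, Sum.inr j2} :
        Set (Fin (m+2) ⊕ Fin (m+2))) ⊆ S := by
      intro x hx
      rcases hx with rfl | rfl | rfl | rfl
      · exact hu3S
      · exact hu4S
      · exact hu1S
      · exact hu2S
    have h4 : ({Sum.inl k1, Sum.inl k2, Sum.inr j1, Sum.inr j2} :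
        Set (Fin (m+2) ⊕ Fin (m+2))).ncard = 4 :=
      ncard_quad (by simp [hk12]) (by simp) (by simp) (by simp) (by simp) (by simp [hj12])
    calc 4 = _ := h4.symm
      _ ≤ S.ncard := Set.ncard_le_ncard hsub (Set.toFinite S)

end KnnMain

section Forward
variable {V : Type*} [Fintype V] {G : SimpleGraph V} {A B : Set V}

lemma IsBipartitionOf.symm (h : IsBipartitionOf G A B) : IsBipartitionOf G B A :=
  ⟨fun v => (h.1 v).symm, fun u v huv => (h.2 huv).symm⟩

lemma IsBipartitionOf.notB (h : IsBipartitionOf G A B) {a : V} (ha : a ∈ A) : a ∉ B := by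
  rcases h.1 a with ⟨_, h2⟩ | ⟨_, h2⟩
  · exact h2
  · exact absurd ha h2

lemma IsBipartitionOf.adj_mem (h : IsBipartitionOf G A B) {a w : V} (ha : a ∈ A)
    (haw : G.Adj a w) : w ∈ B := by
  rcases h.2 haw with ⟨_, h2⟩ | ⟨h2, _⟩
  · exact h2
  · exact absurd h2 (h.notB ha)

lemma IsBipartitionOf.not_adj (h : IsBipartitionOf G A B) {u v : V} (hu : u ∈ A)
    (hv : v ∈ A) : ¬ G.Adj u v := fun hadj => h.notB hv (h.adj_mem hu hadj)

lemma IsBipartitionOf.ne_of_mem (h : IsBipartitionOf G A B) {a b : V} (ha : a ∈ A)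
    (hb : b ∈ B) : a ≠ b := fun he => h.notB ha (by rw [he]; exact hb)

lemma twin_pair (hftf : FalseTwinFree G) {u v : V} (h : u ≠ v) :
    (∃ w, G.Adj v w ∧ ¬G.Adj u w) ∨ (∃ w, G.Adj u w ∧ ¬G.Adj v w) := by
  by_contra hc
  push_neg at hc
  refine hftf u v h ?_
  ext w
  simp only [SimpleGraph.mem_neighborSet]
  exact ⟨hc.2 w, hc.1 w⟩

lemma twin_pair' (hftf : FalseTwinFree G) {S : Set V} {u v : V} (hu : u ∈ S) (hv : v ∈ S)
    (h : u ≠ v) :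
    ∃ x1 ∈ S, ∃ x2 ∈ S, x1 ≠ x2 ∧ ∃ w, G.Adj x2 w ∧ ¬ G.Adj x1 w := by
  rcases twin_pair hftf h with ⟨w, hw⟩ | ⟨w, hw⟩
  · exact ⟨u, hu, v, hv, h, w, hw⟩
  · exact ⟨v, hv, u, hu, h.symm, w, hw⟩

/-- Claim A : some pair in `B` dominates `A`. -/
lemma claimA (hbip : IsBipartitionOf G A B) (hftf : FalseTwinFree G)
    (hiso : NoIsolatedVerts G) (hg : grundyTotalDomNum G = 4)
    (hAne : A.Nonempty) (hBne : B.Nonempty) :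
    ∃ b1 ∈ B, ∃ b2 ∈ B, ∀ a ∈ A, G.Adj a b1 ∨ G.Adj a b2 := by
  by_contra H
  push_neg at H
  obtain ⟨b0, hb0⟩ := hBne
  obtain ⟨a0, ha0⟩ := hAne
  -- B has two distinct elements
  have hB2 : ∃ y1 ∈ B, ∃ y2 ∈ B, y1 ≠ y2 := by
    by_contra hB1
    push_neg at hB1
    have hall : ∀ a ∈ A, G.Adj a b0 := by
      intro a ha
      obtain ⟨u, hu⟩ := hiso a
      have huB : u ∈ B := hbip.adj_mem ha hu
      rwa [hB1 u huB b0 hb0] at hu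
    obtain ⟨a, ha, hna, -⟩ := H b0 hb0 b0 hb0
    exact hna (hall a ha)
  -- A has two distinct elements
  have hA2 : ∃ x1 ∈ A, ∃ x2 ∈ A, x1 ≠ x2 := by
    by_contra hA1
    push_neg at hA1
    obtain ⟨a, ha, hna, -⟩ := H b0 hb0 b0 hb0
    obtain ⟨u, hu⟩ := hiso b0
    have huA : u ∈ A := hbip.symm.adj_mem hb0 hu
    have : u = a := by
      have h1 := hA1 u huA a ha
      exact h1
    rw [this] at hu
    exact hna hu.symm
  obtain ⟨p1, hp1, p2, hp2, hp12⟩ := hA2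
  obtain ⟨q1, hq1, q2, hq2, hq12⟩ := hB2
  -- ordered twin pairs
  obtain ⟨x1, hx1, x2, hx2, hx12, wx, hwx1, hwx2⟩ := twin_pair' hftf hp1 hp2 hp12
  obtain ⟨y1, hy1, y2, hy2, hy12, wy, hwy1, hwy2⟩ := twin_pair' hftf hq1 hq2 hq12
  -- uncovered vertex for the pair (y1, y2)
  obtain ⟨astar, hastar, hna1, hna2⟩ := H y1 hy1 y2 hy2
  obtain ⟨y3, hy3adj⟩ := hiso astar
  have hy3B : y3 ∈ B := hbip.adj_mem hastar hy3adj
  have hy31 : y3 ≠ y1 := fun h => hna1 (h ▸ hy3adj)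
  have hy32 : y3 ≠ y2 := fun h => hna2 (h ▸ hy3adj)
  -- witnesses for x1, x2 coming from B
  obtain ⟨u1, hu1⟩ := hiso x1
  have hu1B : u1 ∈ B := hbip.adj_mem hx1 hu1
  have hwxB : wx ∈ B := hbip.adj_mem hx2 hwx1
  -- the legal sequence [y1, y2, y3, x1, x2]
  have hlegal : IsLegalSeq G [y1, y2, y3, x1, x2] := by
    apply legal_five
    · have c1 : y1 ≠ x1 := (hbip.ne_of_mem hx1 hy1).symm
      have c2 : y1 ≠ x2 := (hbip.ne_of_mem hx2 hy1).symm
      have c3 : y2 ≠ x1 := (hbip.ne_of_mem hx1 hy2).symm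
      have c4 : y2 ≠ x2 := (hbip.ne_of_mem hx2 hy2).symm
      have c5 : y3 ≠ x1 := (hbip.ne_of_mem hx1 hy3B).symm
      have c6 : y3 ≠ x2 := (hbip.ne_of_mem hx2 hy3B).symm
      simp [hy12, hy31.symm, hy32.symm, c1, c2, c3, c4, c5, c6, hx12]
    · exact ⟨wy, hwy1, hwy2⟩
    · exact ⟨astar, hy3adj.symm, fun h => hna1 h.symm, fun h => hna2 h.symm⟩
    · exact ⟨u1, hu1, hbip.symm.not_adj hy1 hu1B, hbip.symm.not_adj hy2 hu1B,
        hbip.symm.not_adj hy3B hu1B⟩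
    · exact ⟨wx, hwx1, hbip.symm.not_adj hy1 hwxB, hbip.symm.not_adj hy2 hwxB,
        hbip.symm.not_adj hy3B hwxB, hwx2⟩
  have := legal_length_le_four hiso hg hlegal
  simp at this

/-- Claim B : every vertex of `A` has a non-neighbour in `B`. -/
lemma claimB (hbip : IsBipartitionOf G A B) (hftf : FalseTwinFree G)
    (hiso : NoIsolatedVerts G) (hg : grundyTotalDomNum G = 4) (ht : totalDomNum G = 4)
    (hAne : A.Nonempty) (hBne : B.Nonempty) {a : V} (ha : a ∈ A) :
    ∃ b ∈ B, ¬ G.Adj a b := by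
  by_contra Hc
  push_neg at Hc
  obtain ⟨b1, hb1, b2, hb2, hcov⟩ := claimA hbip hftf hiso hg hAne hBne
  have hT : IsTotalDomSet G {a, b1, b2} := by
    intro v
    rcases hbip.1 v with ⟨hv, -⟩ | ⟨hv, -⟩
    · rcases hcov v hv with h | h
      · exact ⟨b1, by simp, h⟩
      · exact ⟨b2, by simp, h⟩
    · exact ⟨a, by simp, (Hc v hv).symm⟩
  have h4 := tds_four_le ht hT
  have h3 : ({a, b1, b2} : Set V).ncard ≤ 3 := by
    calc ({a, b1, b2} : Set V).ncard ≤ ({b1, b2} : Set V).ncard + 1 := Set.ncard_insert_le _ _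
      _ ≤ (({b2} : Set V).ncard + 1) + 1 := by
          exact Nat.add_le_add_right (Set.ncard_insert_le _ _) 1
      _ = 3 := by rw [Set.ncard_singleton]
  omega

/-- Key lemma: if `a∈A` misses `b∈B`, `a'` hits `b`, then `{a,a'}` dominates `B`. -/
lemma lemL (hbip : IsBipartitionOf G A B) (hftf : FalseTwinFree G)
    (hiso : NoIsolatedVerts G) (hg : grundyTotalDomNum G = 4)
    {a b a' y : V} (ha : a ∈ A) (hb : b ∈ B) (hab : ¬ G.Adj a b) (ha'b : G.Adj a' b)
    (hy : y ∈ B) (hay : ¬ G.Adj a y) (ha'y : ¬ G.Adj a' y) : False := by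
  have ha' : a' ∈ A := hbip.symm.adj_mem hb ha'b.symm
  have haa' : a ≠ a' := fun h => hab (h ▸ ha'b)
  obtain ⟨a'', ha''y⟩ := hiso y
  have ha'' : a'' ∈ A := hbip.symm.adj_mem hy ha''y
  have h1 : a'' ≠ a := fun h => hay (h ▸ ha''y).symm
  have h2 : a'' ≠ a' := fun h => ha'y (h ▸ ha''y).symm
  have hby : b ≠ y := fun h => ha'y (h ▸ ha'b)
  obtain ⟨z1, hz1, z2, hz2, hz12, wz, hwz1, hwz2⟩ :=
    twin_pair' hftf hb hy hby
  have hwzA : wz ∈ A := hbip.symm.adj_mem hz2 hwz1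
  obtain ⟨u1, hu1⟩ := hiso z1
  have hu1A : u1 ∈ A := hbip.symm.adj_mem hz1 hu1
  have hlegal : IsLegalSeq G [a, a', a'', z1, z2] := by
    apply legal_five
    · have c1 : a ≠ z1 := hbip.ne_of_mem ha hz1
      have c2 : a ≠ z2 := hbip.ne_of_mem ha hz2
      have c3 : a' ≠ z1 := hbip.ne_of_mem ha' hz1
      have c4 : a' ≠ z2 := hbip.ne_of_mem ha' hz2
      have c5 : a'' ≠ z1 := hbip.ne_of_mem ha'' hz1
      have c6 : a'' ≠ z2 := hbip.ne_of_mem ha'' hz2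
      simp [haa', h1.symm, h2.symm, c1, c2, c3, c4, c5, c6, hz12]
    · exact ⟨b, ha'b, hab⟩
    · exact ⟨y, ha''y.symm, hay, ha'y⟩
    · exact ⟨u1, hu1, hbip.not_adj ha hu1A, hbip.not_adj ha' hu1A, hbip.not_adj ha'' hu1A⟩
    · exact ⟨wz, hwz1, hbip.not_adj ha hwzA, hbip.not_adj ha' hwzA,
        hbip.not_adj ha'' hwzA, hwz2⟩
  have := legal_length_le_four hiso hg hlegal
  simp at this

/-- Claim C : the non-neighbour in `B` of a vertex of `A` is unique. -/
lemma claimC (hbip : IsBipartitionOf G A B) (hftf : FalseTwinFree G)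
    (hiso : NoIsolatedVerts G) (hg : grundyTotalDomNum G = 4)
    {a b1 b2 : V} (ha : a ∈ A) (hb1 : b1 ∈ B) (hb2 : b2 ∈ B) (hne : b1 ≠ b2)
    (h1 : ¬ G.Adj a b1) (h2 : ¬ G.Adj a b2) : False := by
  have key : ∀ c1 c2 : V, c1 ∈ B → c2 ∈ B → ¬ G.Adj a c1 → ¬ G.Adj a c2 →
      ∀ x, G.Adj c2 x → G.Adj c1 x := by
    intro c1 c2 hc1 hc2 hac1 hac2 x hx
    have hxA : x ∈ A := hbip.symm.adj_mem hc2 hx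
    by_contra hnadj
    exact lemL hbip hftf hiso hg ha hc2 hac2 hx.symm hc1 hac1
      (fun h => hnadj h.symm)
  have hsub : G.neighborSet b1 = G.neighborSet b2 := by
    ext x
    simp only [SimpleGraph.mem_neighborSet]
    exact ⟨key b2 b1 hb2 hb1 h2 h1 x, key b1 b2 hb1 hb2 h1 h2 x⟩
  exact hftf b1 b2 hne hsub

end Forward

lemma forward_main {V : Type*} [Fintype V] {G : SimpleGraph V} {A B : Set V}
    (hbip : IsBipartitionOf G A B) (hftf : FalseTwinFree G) (hiso : NoIsolatedVerts G)
    (ht : totalDomNum G = 4) (hg : grundyTotalDomNum G = 4) :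
    ∃ n : ℕ, 2 ≤ n ∧ Nonempty (G ≃g KnnMinusMatching n) := by
  classical
  -- V nonempty
  have hVne : Nonempty V := by
    by_contra h
    have hempty : IsTotalDomSet G (∅ : Set V) := fun v => absurd ⟨v⟩ h
    have h0 : totalDomNum G ≤ 0 := Nat.sInf_le ⟨∅, hempty, by simp⟩
    omega
  have hAne : A.Nonempty := by
    by_contra h
    rw [Set.not_nonempty_iff_eq_empty] at h
    obtain ⟨v⟩ := hVne
    obtain ⟨u, hu⟩ := hiso v
    rcases hbip.2 hu with ⟨h1, -⟩ | ⟨-, h1⟩ <;> simp [h] at h1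
  have hBne : B.Nonempty := by
    by_contra h
    rw [Set.not_nonempty_iff_eq_empty] at h
    obtain ⟨v⟩ := hVne
    obtain ⟨u, hu⟩ := hiso v
    rcases hbip.2 hu with ⟨-, h1⟩ | ⟨h1, -⟩ <;> simp [h] at h1
  -- unique non-neighbours
  have hA! : ∀ a : ↥A, ∃! b : ↥B, ¬ G.Adj ↑a ↑b := by
    rintro ⟨a, ha⟩
    obtain ⟨b, hb, hnadj⟩ := claimB hbip hftf hiso hg ht hAne hBne ha
    refine ⟨⟨b, hb⟩, hnadj, ?_⟩
    rintro ⟨b', hb'⟩ h'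
    by_contra hne
    have hne' : b' ≠ b := fun h => hne (Subtype.ext h)
    exact claimC hbip hftf hiso hg ha hb' hb hne' h' hnadj
  have hB! : ∀ b : ↥B, ∃! a : ↥A, ¬ G.Adj ↑b ↑a := by
    rintro ⟨b, hb⟩
    obtain ⟨a, ha, hnadj⟩ := claimB hbip.symm hftf hiso hg ht hBne hAne hb
    refine ⟨⟨a, ha⟩, hnadj, ?_⟩
    rintro ⟨a', ha'⟩ h'
    by_contra hne
    have hne' : a' ≠ a := fun h => hne (Subtype.ext h)
    exact claimC hbip.symm hftf hiso hg hb ha' ha hne' h' hnadj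
  choose f hf using hA!
  choose g hgg using hB!
  have hgf : ∀ a : ↥A, g (f a) = a := by
    intro a
    exact ((hgg (f a)).2 a (fun h => (hf a).1 h.symm)).symm
  have hfg : ∀ b : ↥B, f (g b) = b := by
    intro b
    exact ((hf (g b)).2 b (fun h => (hgg b).1 h.symm)).symm
  let equivAB : ↥A ≃ ↥B := ⟨f, g, hgf, hfg⟩
  set n := Fintype.card ↥A with hn
  let eA : ↥A ≃ Fin n := Fintype.equivFin ↥A
  have hcompl : ∀ x : V, ¬ x ∈ A ↔ x ∈ B := by
    intro x
    rcases hbip.1 x with ⟨h1, h2⟩ | ⟨h1, h2⟩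
    · exact ⟨fun h => absurd h1 h, fun h => absurd h h2⟩
    · exact ⟨fun _ => h1, fun _ => h2⟩
  let φ : V ≃ Fin n ⊕ Fin n :=
    (Equiv.sumCompl (· ∈ A)).symm.trans
      (Equiv.sumCongr eA ((Equiv.subtypeEquivRight hcompl).trans (equivAB.symm.trans eA)))
  have hφA : ∀ (x : V) (hx : x ∈ A), φ x = Sum.inl (eA ⟨x, hx⟩) := by
    intro x hx
    simp only [φ, Equiv.trans_apply, Equiv.sumCompl_symm_apply_of_pos hx,
      Equiv.sumCongr_apply, Sum.map_inl]
  have hφB : ∀ (x : V) (hx : x ∈ B), φ x = Sum.inr (eA (g ⟨x, hx⟩)) := by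
    intro x hx
    have hnx : ¬ x ∈ A := (hcompl x).mpr hx
    simp only [φ, Equiv.trans_apply, Equiv.sumCompl_symm_apply_of_neg hnx,
      Equiv.sumCongr_apply, Sum.map_inr, Equiv.subtypeEquivRight_apply]
    rfl
  -- adjacency characterisation
  have hadjchar : ∀ (a : ↥A) (b : ↥B), G.Adj ↑a ↑b ↔ b ≠ f a := by
    intro a b
    constructor
    · intro h hbe
      rw [hbe] at h
      exact (hf a).1 h
    · intro hne
      by_contra hnadj
      exact hne ((hf a).2 b hnadj)
  have hiffg : ∀ (a : ↥A) (b : ↥B), b ≠ f a ↔ a ≠ g b := by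
    intro a b
    constructor
    · intro h he
      exact h (by rw [he, hfg])
    · intro h he
      exact h (by rw [he, hgf])
  have hmap : ∀ u v : V, (KnnMinusMatching n).Adj (φ u) (φ v) ↔ G.Adj u v := by
    intro u v
    by_cases hu : u ∈ A <;> by_cases hv : v ∈ A
    · rw [hφA u hu, hφA v hv]
      exact iff_of_false Knn_not_adj_inl_inl (hbip.not_adj hu hv)
    · have hvB : v ∈ B := (hcompl v).mp hv
      rw [hφA u hu, hφB v hvB, Knn_adj_inl_inr]
      rw [hadjchar ⟨u, hu⟩ ⟨v, hvB⟩, hiffg]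
      exact not_iff_not.mpr eA.apply_eq_iff_eq
    · have huB : u ∈ B := (hcompl u).mp hu
      rw [hφB u huB, hφA v hv, Knn_adj_inr_inl]
      have : G.Adj u v ↔ G.Adj v u := ⟨fun h => h.symm, fun h => h.symm⟩
      rw [this, hadjchar ⟨v, hv⟩ ⟨u, huB⟩, hiffg]
      exact not_iff_not.mpr eA.apply_eq_iff_eq
    · have huB : u ∈ B := (hcompl u).mp hu
      have hvB : v ∈ B := (hcompl v).mp hv
      rw [hφB u huB, hφB v hvB]
      exact iff_of_false Knn_not_adj_inr_inr (hbip.symm.not_adj huB hvB)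
  -- n ≥ 2
  have hn2 : 2 ≤ n := by
    obtain ⟨b0, hb0⟩ := id hBne
    obtain ⟨a0, ha0, hna0⟩ := claimB hbip.symm hftf hiso hg ht hBne hAne hb0
    obtain ⟨u, hu⟩ := hiso b0
    have huA : u ∈ A := hbip.symm.adj_mem hb0 hu
    have hne : (⟨u, huA⟩ : ↥A) ≠ ⟨a0, ha0⟩ := by
      intro h
      have : u = a0 := congrArg Subtype.val h
      rw [this] at hu
      exact hna0 hu
    rw [hn]
    exact Fintype.one_lt_card_iff.mpr ⟨_, _, hne⟩
  exact ⟨n, hn2, ⟨⟨φ, fun {u v} => hmap u v⟩⟩⟩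

/-- A bipartite false twin-free graph without isolated vertices has
`γ_t(G) = γ_gr^t(G) = 4` iff it is isomorphic to `K_{n,n} − M` for some `n ≥ 2`,
where `M` is a perfect matching of `K_{n,n}`. -/
theorem total_dom_eq_grundy_eq_four_iff {V : Type*} [Fintype V] (G : SimpleGraph V)
    (hbip : ∃ A B : Set V, IsBipartitionOf G A B)
    (hftf : FalseTwinFree G) (hiso : NoIsolatedVerts G) :
    (totalDomNum G = 4 ∧ grundyTotalDomNum G = 4) ↔
      ∃ n : ℕ, 2 ≤ n ∧ Nonempty (G ≃g KnnMinusMatching n) := by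
  constructor
  · rintro ⟨ht, hg⟩
    obtain ⟨A, B, hbipAB⟩ := hbip
    exact forward_main hbipAB hftf hiso ht hg
  · rintro ⟨n, hn, ⟨e⟩⟩
    obtain ⟨m, rfl⟩ : ∃ m, n = m + 2 := ⟨n - 2, by omega⟩
    exact ⟨by rw [totalDom_eq_of_iso e, Knn_totalDom],
      by rw [grundy_eq_of_iso e, Knn_grundy]⟩
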